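/- Let φ₁,…,φ_N be i.i.d. uniform on [0, 2π). Then the probability that Σ_{k=1}^N Σ_{j=1}^N sin²(φ_k − φ_j) < N²/32 tends to 0 as N → ∞. -/

import Mathlib

open MeasureTheory ProbabilityTheory Filter Topology

private lemma double_sum_identity (c s : ℕ → ℝ) (N : ℕ) :
    ∑ k ∈ Finset.range N, ∑ j ∈ Finset.range N,
      (1/2 - (c k * c j + s k * s j)/2)
    = (N:ℝ)^2/2 - ((∑ k ∈ Finset.range N, c k)^2 + (∑ k ∈ Finset.range N, s k)^2)/2 := by
  rw [sq (∑ k ∈ Finset.range N, c k), sq (∑ k ∈ Finset.range N, s k),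
    Finset.sum_mul_sum, Finset.sum_mul_sum]
  simp only [Finset.sum_sub_distrib, Finset.sum_add_distrib, ← Finset.sum_div,
    Finset.sum_const, Finset.card_range, nsmul_eq_mul]
  ring

private lemma bdd_int {Ω : Type*} [MeasureSpace Ω] [IsProbabilityMeasure (ℙ : Measure Ω)]
    {f : Ω → ℝ} (hm : Measurable f) (hb : ∀ ω, |f ω| ≤ 1) : Integrable f ℙ :=
  (integrable_const 1).mono' hm.aestronglyMeasurable
    (Filter.Eventually.of_forall (fun ω => by simpa using hb ω))

private lemma sq_sum_identity (c s : ℕ → ℝ) (N : ℕ) :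
    (∑ k ∈ Finset.range N, c k)^2 + (∑ k ∈ Finset.range N, s k)^2
    = ∑ k ∈ Finset.range N, ∑ j ∈ Finset.range N, (c k * c j + s k * s j) := by
  rw [sq, sq, Finset.sum_mul_sum, Finset.sum_mul_sum, ← Finset.sum_add_distrib]
  exact Finset.sum_congr rfl fun k _ => (Finset.sum_add_distrib).symm

theorem uniform_angles_sin_sq_sum_lower_bound
    (Ω : Type*) [MeasureSpace Ω] [IsProbabilityMeasure (ℙ : Measure Ω)]
    (φ : ℕ → Ω → ℝ) (hmeas : ∀ i, Measurable (φ i))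
    (hindep : iIndepFun φ ℙ)
    (hunif : ∀ i, Measure.map (φ i) ℙ
      = (ENNReal.ofReal (2 * Real.pi))⁻¹ • (volume.restrict (Set.Ico 0 (2 * Real.pi)))) :
    Tendsto (fun N : ℕ =>
        ℙ {ω | ∑ k ∈ Finset.range N, ∑ j ∈ Finset.range N,
            Real.sin (φ k ω - φ j ω) ^ 2 < (N : ℝ) ^ 2 / 32})
      atTop (𝓝 0) := by
  have pi_pos := Real.pi_pos
  -- measurability of cos(2φ), sin(2φ)
  have mc : ∀ i, Measurable (fun ω => Real.cos (2 * φ i ω)) :=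
    fun i => ((hmeas i).const_mul 2).cos
  have ms : ∀ i, Measurable (fun ω => Real.sin (2 * φ i ω)) :=
    fun i => ((hmeas i).const_mul 2).sin
  -- expectation of g(φ i) when interval integral vanishes
  have hexp : ∀ (i : ℕ) (g : ℝ → ℝ), Measurable g →
      (∫ x in (0:ℝ)..(2*Real.pi), g x) = 0 → ∫ ω, g (φ i ω) ∂ℙ = 0 := by
    intro i g hg hz
    rw [← integral_map (hmeas i).aemeasurable hg.aestronglyMeasurable, hunif i,
      integral_smul_measure]
    have h0 : ∫ x in Set.Ico (0:ℝ) (2*Real.pi), g x = 0 := by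
      rw [integral_Ico_eq_integral_Ioo, ← integral_Ioc_eq_integral_Ioo,
        ← intervalIntegral.integral_of_le (by positivity)]
      exact hz
    rw [h0]; simp
  have hcos0 : ∀ i, ∫ ω, Real.cos (2 * φ i ω) ∂ℙ = 0 := by
    intro i
    refine hexp i (fun x => Real.cos (2*x)) ((measurable_id.const_mul 2).cos) ?_
    rw [intervalIntegral.integral_comp_mul_left Real.cos two_ne_zero, integral_cos]
    simp [show (2:ℝ)*(2*Real.pi) = 2*Real.pi+2*Real.pi by ring, Real.sin_add]
  have hsin0 : ∀ i, ∫ ω, Real.sin (2 * φ i ω) ∂ℙ = 0 := by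
    intro i
    refine hexp i (fun x => Real.sin (2*x)) ((measurable_id.const_mul 2).sin) ?_
    rw [intervalIntegral.integral_comp_mul_left Real.sin two_ne_zero, integral_sin]
    simp [show (2:ℝ)*(2*Real.pi) = 2*Real.pi+2*Real.pi by ring, Real.cos_add]
  -- independence gives product of expectations
  have hmul : ∀ (g : ℝ → ℝ), Measurable g → ∀ k j : ℕ, k ≠ j →
      ∫ ω, g (φ k ω) * g (φ j ω) ∂ℙ
        = (∫ ω, g (φ k ω) ∂ℙ) * (∫ ω, g (φ j ω) ∂ℙ) := by
    intro g hg k j hkj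
    exact ProbabilityTheory.IndepFun.integral_fun_mul_eq_mul_integral ((hindep.indepFun hkj).comp hg hg)
      (hg.comp (hmeas k)).aestronglyMeasurable (hg.comp (hmeas j)).aestronglyMeasurable
  -- integrability of products
  have hintmul : ∀ k j : ℕ, Integrable (fun ω =>
      Real.cos (2*φ k ω) * Real.cos (2*φ j ω) + Real.sin (2*φ k ω) * Real.sin (2*φ j ω)) ℙ := by
    intro k j
    have h1 : Integrable (fun ω => Real.cos (2*φ k ω) * Real.cos (2*φ j ω)) ℙ :=
      bdd_int ((mc k).mul (mc j)) (fun ω => by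
        rw [abs_mul]
        exact mul_le_one₀ (Real.abs_cos_le_one _) (abs_nonneg _) (Real.abs_cos_le_one _))
    have h2 : Integrable (fun ω => Real.sin (2*φ k ω) * Real.sin (2*φ j ω)) ℙ :=
      bdd_int ((ms k).mul (ms j)) (fun ω => by
        rw [abs_mul]
        exact mul_le_one₀ (Real.abs_sin_le_one _) (abs_nonneg _) (Real.abs_sin_le_one _))
    exact h1.add h2
  -- the second moment
  have hterm : ∀ k j : ℕ, ∫ ω, (Real.cos (2*φ k ω) * Real.cos (2*φ j ω)
      + Real.sin (2*φ k ω) * Real.sin (2*φ j ω)) ∂ℙ = if k = j then 1 else 0 := by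
    intro k j
    by_cases h : k = j
    · subst h
      rw [if_pos rfl]
      have heq : ∀ ω : Ω, Real.cos (2*φ k ω) * Real.cos (2*φ k ω)
          + Real.sin (2*φ k ω) * Real.sin (2*φ k ω) = 1 := fun ω => by
        have := Real.sin_sq_add_cos_sq (2*φ k ω); nlinarith
      rw [integral_congr_ae (Filter.Eventually.of_forall heq)]
      simp
    · rw [if_neg h]
      have h1 : Integrable (fun ω => Real.cos (2*φ k ω) * Real.cos (2*φ j ω)) ℙ :=
        bdd_int ((mc k).mul (mc j)) (fun ω => by
          rw [abs_mul]
          exact mul_le_one₀ (Real.abs_cos_le_one _) (abs_nonneg _) (Real.abs_cos_le_one _))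
      have h2 : Integrable (fun ω => Real.sin (2*φ k ω) * Real.sin (2*φ j ω)) ℙ :=
        bdd_int ((ms k).mul (ms j)) (fun ω => by
          rw [abs_mul]
          exact mul_le_one₀ (Real.abs_sin_le_one _) (abs_nonneg _) (Real.abs_sin_le_one _))
      rw [integral_add h1 h2,
        hmul (fun x => Real.cos (2*x)) ((measurable_id.const_mul 2).cos) k j h,
        hmul (fun x => Real.sin (2*x)) ((measurable_id.const_mul 2).sin) k j h,
        hcos0, hsin0]
      ring
  have hEf : ∀ N : ℕ, ∫ ω, ((∑ k ∈ Finset.range N, Real.cos (2*φ k ω))^2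
      + (∑ k ∈ Finset.range N, Real.sin (2*φ k ω))^2) ∂ℙ = N := by
    intro N
    have hrw : ∀ ω : Ω, (∑ k ∈ Finset.range N, Real.cos (2*φ k ω))^2
        + (∑ k ∈ Finset.range N, Real.sin (2*φ k ω))^2
        = ∑ k ∈ Finset.range N, ∑ j ∈ Finset.range N,
            (Real.cos (2*φ k ω) * Real.cos (2*φ j ω)
              + Real.sin (2*φ k ω) * Real.sin (2*φ j ω)) := fun ω =>
      sq_sum_identity (fun k => Real.cos (2*φ k ω)) (fun k => Real.sin (2*φ k ω)) N
    rw [integral_congr_ae (Filter.Eventually.of_forall hrw),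
      integral_finset_sum _ (fun k _ => integrable_finset_sum _ (fun j _ => hintmul k j))]
    rw [Finset.sum_congr rfl (fun k _ => integral_finset_sum _ (fun j _ => hintmul k j))]
    simp only [hterm, Finset.sum_ite_eq, Finset.mem_range]
    rw [Finset.sum_ite_of_true (fun k hk => Finset.mem_range.mp hk)]
    simp
  -- Markov bound
  have hbound : ∀ N : ℕ, 1 ≤ N →
      ℙ {ω | ∑ k ∈ Finset.range N, ∑ j ∈ Finset.range N,
            Real.sin (φ k ω - φ j ω) ^ 2 < (N : ℝ) ^ 2 / 32}
        ≤ ENNReal.ofReal (16/(15*(N:ℝ))) := by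
    intro N hN
    have hNpos : (0:ℝ) < N := by exact_mod_cast hN
    set f : Ω → ℝ := fun ω => (∑ k ∈ Finset.range N, Real.cos (2*φ k ω))^2
      + (∑ k ∈ Finset.range N, Real.sin (2*φ k ω))^2 with hf
    have hsub : {ω | ∑ k ∈ Finset.range N, ∑ j ∈ Finset.range N,
            Real.sin (φ k ω - φ j ω) ^ 2 < (N : ℝ) ^ 2 / 32}
        ⊆ {ω | 15*(N:ℝ)^2/16 ≤ f ω} := by
      intro ω hω
      simp only [Set.mem_setOf_eq] at hω ⊢
      have h1 : ∀ a b : ℝ, Real.sin (a-b)^2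
          = 1/2 - (Real.cos (2*a) * Real.cos (2*b) + Real.sin (2*a) * Real.sin (2*b))/2 := by
        intro a b
        rw [Real.sin_sq_eq_half_sub, mul_sub, Real.cos_sub]
      have hkey : ∑ k ∈ Finset.range N, ∑ j ∈ Finset.range N,
          Real.sin (φ k ω - φ j ω) ^ 2 = (N:ℝ)^2/2 - f ω / 2 := by
        simp_rw [h1]
        exact double_sum_identity (fun k => Real.cos (2*φ k ω))
          (fun k => Real.sin (2*φ k ω)) N
      rw [hkey] at hω
      linarith
    have hfi : Integrable f ℙ := by
      have hrw : ∀ ω : Ω, f ω = ∑ k ∈ Finset.range N, ∑ j ∈ Finset.range N,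
          (Real.cos (2*φ k ω) * Real.cos (2*φ j ω)
            + Real.sin (2*φ k ω) * Real.sin (2*φ j ω)) := fun ω =>
        sq_sum_identity (fun k => Real.cos (2*φ k ω)) (fun k => Real.sin (2*φ k ω)) N
      exact (integrable_finset_sum _ (fun k _ =>
        integrable_finset_sum _ (fun j _ => hintmul k j))).congr
        (Filter.Eventually.of_forall (fun ω => (hrw ω).symm))
    have hmarkov := mul_meas_ge_le_integral_of_nonneg
      (Filter.Eventually.of_forall (fun ω => by positivity : ∀ ω, (0:ℝ) ≤ f ω)) hfi
      (15*(N:ℝ)^2/16)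
    rw [hEf N] at hmarkov
    have hT : (ℙ {ω | 15*(N:ℝ)^2/16 ≤ f ω}).toReal ≤ 16/(15*(N:ℝ)) := by
      have hε : (0:ℝ) < 15*(N:ℝ)^2/16 := by positivity
      rw [le_div_iff₀ (by positivity : (0:ℝ) < 15*(N:ℝ))]
      rw [measureReal_def] at hmarkov
      nlinarith [ENNReal.toReal_nonneg (a := ℙ {ω | 15*(N:ℝ)^2/16 ≤ f ω})]
    calc ℙ {ω | ∑ k ∈ Finset.range N, ∑ j ∈ Finset.range N,
            Real.sin (φ k ω - φ j ω) ^ 2 < (N : ℝ) ^ 2 / 32}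
        ≤ ℙ {ω | 15*(N:ℝ)^2/16 ≤ f ω} := measure_mono hsub
      _ = ENNReal.ofReal (ℙ {ω | 15*(N:ℝ)^2/16 ≤ f ω}).toReal :=
          (ENNReal.ofReal_toReal (measure_ne_top _ _)).symm
      _ ≤ ENNReal.ofReal (16/(15*(N:ℝ))) := ENNReal.ofReal_le_ofReal hT
  -- conclude
  have h0 : Tendsto (fun N : ℕ => ENNReal.ofReal (16/(15*(N:ℝ)))) atTop (𝓝 0) := by
    rw [← ENNReal.ofReal_zero]
    apply ENNReal.tendsto_ofReal
    have heq : (fun N : ℕ => 16/(15*(N:ℝ))) = fun N : ℕ => (16/15)/(N:ℝ) := by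
      funext N; rw [div_div]
    rw [heq]
    exact tendsto_const_div_atTop_nhds_zero_nat _
  refine tendsto_of_tendsto_of_tendsto_of_le_of_le' tendsto_const_nhds h0
    (Filter.Eventually.of_forall fun N => zero_le) ?_
  filter_upwards [eventually_ge_atTop 1] with N hN
  exact hbound N hN
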